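/- Let (V, E, V_□, V_◇, w) be a finite arena with real payoffs, let λ ∈ ℝ, let ℓ ≥ 1 be an integer, let T ⊆ V, and let v ∈ V. If Player 1 has a strategy σ from v such that every outcome of σ satisfies DirFWMP(ℓ, λ) and at least one outcome of σ visits T, then Player 1 has a strategy σ' from v such that every outcome of σ' satisfies DirFWMP(ℓ, λ) and at least one outcome of σ' visits T within the first |V|·ℓ steps (i.e., π n ∈ T for some n ≤ |V|·ℓ). -/

import Mathlib

/-- A finite arena: a deadlock-free edge relation `E`, a set `P1` of Player-1
vertices (the probabilistic vertices `V_◇` form the complement of `P1`), and a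
real payoff `w` on edges. -/
structure Arena (V : Type*) where
  E : V → V → Prop
  P1 : Set V
  w : V → V → ℝ
  nodeadlock : ∀ v : V, ∃ u : V, E v u

/-- A play is an infinite `E`-path. -/
def Arena.IsPlay {V : Type*} (A : Arena V) (π : ℕ → V) : Prop :=
  ∀ n : ℕ, A.E (π n) (π (n + 1))

/-- A strategy for Player 1: given the history (the strict prefix `v_0 … v_{n-1}`
of the current play) and the current vertex `v_n`, if `v_n` belongs to Player 1
then the strategy picks an out-neighbour of `v_n`. -/
structure Arena.Strategy {V : Type*} (A : Arena V) where
  act : List V → V → V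
  legal : ∀ (h : List V) (v : V), v ∈ A.P1 → A.E v (act h v)

/-- `π` is an outcome of strategy `σ` from `v`. -/
def Arena.IsOutcome {V : Type*} (A : Arena V) (σ : A.Strategy) (v : V) (π : ℕ → V) : Prop :=
  π 0 = v ∧ A.IsPlay π ∧
    ∀ n : ℕ, π n ∈ A.P1 → π (n + 1) = σ.act (List.ofFn fun i : Fin n => π i) (π n)

/-- Player 1 sure-wins objective `Φ` from `v`: some strategy has all of its
outcomes from `v` inside `Φ`. -/
def Arena.SureWins {V : Type*} (A : Arena V) (Φ : Set (ℕ → V)) (v : V) : Prop :=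
  ∃ σ : A.Strategy, ∀ π : ℕ → V, A.IsOutcome σ v π → π ∈ Φ

/-- Total payoff of the window of length `d` starting at position `i` of play `π`. -/
def Arena.winSum {V : Type*} (A : Arena V) (π : ℕ → V) (i d : ℕ) : ℝ :=
  ∑ k ∈ Finset.range d, A.w (π (i + k)) (π (i + k + 1))

/-- `π` satisfies `DirFWMP(ℓ, λ)`: every `λ`-window closes within `ℓ` steps. -/
def Arena.DirFWMP {V : Type*} (A : Arena V) (ℓ : ℕ) (lam : ℝ) (π : ℕ → V) : Prop :=
  ∀ i : ℕ, ∃ d : ℕ, 1 ≤ d ∧ d ≤ ℓ ∧ lam * (d : ℝ) ≤ A.winSum π i d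

/-! ### Auxiliary lemmas -/

lemma winSum_add {V : Type*} (A : Arena V) (π : ℕ → V) (i a b : ℕ) :
    A.winSum π i (a + b) = A.winSum π i a + A.winSum π (i + a) b := by
  induction b with
  | zero => simp [Arena.winSum]
  | succ b ih =>
    have h1 : a + (b + 1) = (a + b) + 1 := rfl
    rw [h1]
    unfold Arena.winSum at *
    rw [Finset.sum_range_succ, Finset.sum_range_succ, ih]
    have h2 : i + (a + b) = i + a + b := by omega
    rw [h2]; ring

lemma winSum_congr {V : Type*} (A : Arena V) (π ρ : ℕ → V) (i j d : ℕ)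
    (h : ∀ t, t ≤ d → ρ (i + t) = π (j + t)) :
    A.winSum ρ i d = A.winSum π j d := by
  unfold Arena.winSum
  refine Finset.sum_congr rfl fun k hk => ?_
  rw [Finset.mem_range] at hk
  have e1 : i + k + 1 = i + (k + 1) := by omega
  have e2 : j + k + 1 = j + (k + 1) := by omega
  rw [e1, e2, h k (by omega), h (k + 1) (by omega)]

lemma aux_reach {V : Type*} [Fintype V] (A : Arena V) (lam : ℝ) (ℓ : ℕ)
    (T : Set V) (v : V) :
    ∀ n : ℕ, ∀ σ : A.Strategy,
      (∀ π : ℕ → V, A.IsOutcome σ v π → A.DirFWMP ℓ lam π) →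
      ∀ π : ℕ → V, A.IsOutcome σ v π → π n ∈ T →
      ∃ σ' : A.Strategy,
        (∀ π : ℕ → V, A.IsOutcome σ' v π → A.DirFWMP ℓ lam π) ∧
        (∃ π : ℕ → V, A.IsOutcome σ' v π ∧ ∃ n : ℕ, n ≤ Fintype.card V * ℓ ∧ π n ∈ T) := by
  intro n
  induction n using Nat.strong_induction_on with
  | _ n IH =>
  intro σ hall π hout hT
  classical
  by_cases hn : n ≤ Fintype.card V * ℓ
  · exact ⟨σ, hall, π, hout, n, hn, hT⟩
  push_neg at hn
  have hD : A.DirFWMP ℓ lam π := hall π hout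
  -- minimal window lengths
  have hex : ∀ i : ℕ, ∃ d : ℕ, 1 ≤ d ∧ lam * (d : ℝ) ≤ A.winSum π i d :=
    fun i => (hD i).imp fun d hd => ⟨hd.1, hd.2.2⟩
  set d : ℕ → ℕ := fun i => Nat.find (hex i) with hd_def
  have hd1 : ∀ i, 1 ≤ d i := fun i => (Nat.find_spec (hex i)).1
  have hdsum : ∀ i, lam * (d i : ℝ) ≤ A.winSum π i (d i) := fun i => (Nat.find_spec (hex i)).2
  have hdℓ : ∀ i, d i ≤ ℓ := by
    intro i
    obtain ⟨e, he1, heℓ, hes⟩ := hD i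
    exact le_trans (Nat.find_min' (hex i) ⟨he1, hes⟩) heℓ
  have hdmin : ∀ i e, 1 ≤ e → e < d i → A.winSum π i e < lam * (e : ℝ) := by
    intro i e he1 helt
    by_contra hc
    push_neg at hc
    exact Nat.find_min (hex i) helt ⟨he1, hc⟩
  -- window positions
  set p : ℕ → ℕ := fun k => Nat.rec 0 (fun _ pk => pk + d pk) k with hp_def
  have hpS : ∀ k, p (k + 1) = p k + d (p k) := fun k => rfl
  have hp0 : p 0 = 0 := rfl
  have hplt : ∀ k, p k < p (k + 1) := by
    intro k; rw [hpS]; have := hd1 (p k); omega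
  have hpmono : StrictMono p := strictMono_nat_of_lt_succ hplt
  have hpbound : ∀ k, p k ≤ k * ℓ := by
    intro k
    induction k with
    | zero => simp [hp0]
    | succ k ih =>
      rw [hpS]
      have h1 := hdℓ (p k)
      have h2 : (k + 1) * ℓ = k * ℓ + ℓ := by ring
      omega
  -- safety within a block
  have hsafe : ∀ k j, p k ≤ j → j < p (k + 1) →
      lam * ((p (k + 1) - j : ℕ) : ℝ) ≤ A.winSum π j (p (k + 1) - j) := by
    intro k j h1 h2
    rcases eq_or_lt_of_le h1 with hq | hlt
    · have h3 : p (k + 1) - j = d (p k) := by rw [hpS]; omega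
      rw [h3, ← hq]
      exact hdsum (p k)
    · have heD : j - p k < d (p k) := by rw [hpS] at h2; omega
      have he1 : 1 ≤ j - p k := by omega
      have hsplit := winSum_add A π (p k) (j - p k) (d (p k) - (j - p k))
      rw [show (j - p k) + (d (p k) - (j - p k)) = d (p k) from by omega,
        show p k + (j - p k) = j from by omega] at hsplit
      have hlow := hdmin (p k) (j - p k) he1 heD
      have hup := hdsum (p k)
      have hrw : p (k + 1) - j = d (p k) - (j - p k) := by rw [hpS]; omega
      rw [hrw, Nat.cast_sub (le_of_lt heD), Nat.cast_sub (le_of_lt hlt)]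
      have : (j : ℝ) - (p k : ℝ) = ((j - p k : ℕ) : ℝ) := by
        rw [Nat.cast_sub h1]
      rw [mul_sub, this]
      linarith
  -- locate the block of a position
  have hloc : ∀ m j, j < p m → ∃ k, k < m ∧ p k ≤ j ∧ j < p (k + 1) := by
    intro m
    induction m with
    | zero => intro j hj; rw [hp0] at hj; omega
    | succ m ih =>
      intro j hj
      by_cases hj' : j < p m
      · obtain ⟨k, hk, hk1, hk2⟩ := ih j hj'
        exact ⟨k, by omega, hk1, hk2⟩
      · exact ⟨m, by omega, by omega, hj⟩
  -- pigeonhole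
  obtain ⟨a, b, hab, heq⟩ :
      ∃ a b : Fin (Fintype.card V + 1), (a : ℕ) < (b : ℕ) ∧ π (p a) = π (p b) := by
    have hcard : Fintype.card V < Fintype.card (Fin (Fintype.card V + 1)) := by simp
    obtain ⟨a, b, hne, hfe⟩ := Fintype.exists_ne_map_eq_of_card_lt
      (fun k : Fin (Fintype.card V + 1) => π (p (k : ℕ))) hcard
    rcases lt_or_gt_of_ne (fun hv => hne (Fin.ext hv) : (a : ℕ) ≠ (b : ℕ)) with hv | hv
    · exact ⟨a, b, hv, hfe⟩
    · exact ⟨b, a, hv, hfe.symm⟩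
  set pa : ℕ := p a with hpa_def
  set qb : ℕ := p b with hqb_def
  have hPQ : pa < qb := hpmono hab
  have hQn : qb < n := by
    have h1 : qb ≤ (b : ℕ) * ℓ := hpbound b
    have h2 : (b : ℕ) ≤ Fintype.card V := by omega
    have h3 : (b : ℕ) * ℓ ≤ Fintype.card V * ℓ := Nat.mul_le_mul_right ℓ h2
    omega
  -- safety up to pa
  have hsafeP : ∀ i, i < pa → ∃ e, 1 ≤ e ∧ e ≤ ℓ ∧ i + e ≤ pa ∧
      lam * (e : ℝ) ≤ A.winSum π i e := by
    intro i hi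
    obtain ⟨k, hk, hk1, hk2⟩ := hloc a i hi
    refine ⟨p (k + 1) - i, by omega, ?_, ?_, hsafe k i hk1 hk2⟩
    · have h3 : p (k + 1) = p k + d (p k) := hpS k
      have := hdℓ (p k)
      omega
    · have h4 : k + 1 ≤ (a : ℕ) := hk
      have h5 := hpmono.monotone h4
      omega
  -- the strategy transformation
  set L2 : List V := List.ofFn (fun i : Fin qb => π i) with hL2_def
  set C : List V → V → Prop := fun h u =>
    pa ≤ h.length ∧ (∀ i : ℕ, ∀ hi : i < h.length, i ≤ pa → h[i]'hi = π i) ∧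
      (h.length = pa → u = π pa) with hC_def
  set σ' : A.Strategy :=
    ⟨fun h u => if C h u then σ.act (L2 ++ h.drop pa) u else σ.act h u, by
      intro h u hu
      split
      · exact σ.legal _ _ hu
      · exact σ.legal _ _ hu⟩ with hσ'_def
  have hact : ∀ h u, σ'.act h u = if C h u then σ.act (L2 ++ h.drop pa) u else σ.act h u :=
    fun h u => rfl
  set H : (ℕ → V) → ℕ → List V := fun ρ m => List.ofFn (fun i : Fin m => ρ i) with hH_def
  have hHlen : ∀ ρ m, (H ρ m).length = m := by intro ρ m; simp [hH_def]
  have hHget : ∀ (ρ : ℕ → V) m (i : ℕ) (hi : i < (H ρ m).length), (H ρ m)[i]'hi = ρ i := by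
    intro ρ m i hi
    simp [hH_def]
  have hHcongr : ∀ (ρ τ : ℕ → V) m, (∀ i, i < m → ρ i = τ i) → H ρ m = H τ m := by
    intro ρ τ m hag
    apply List.ext_getElem
    · simp [hHlen]
    · intro i h1 h2
      rw [hHget, hHget]
      exact hag i (by rwa [hHlen] at h1)
  -- F1: characterisation of C on histories
  have hCiff : ∀ (ρ : ℕ → V) m, C (H ρ m) (ρ m) ↔ (pa ≤ m ∧ ∀ i, i ≤ pa → ρ i = π i) := by
    intro ρ m
    simp only [hC_def]
    constructor
    · rintro ⟨h1, h2, h3⟩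
      rw [hHlen] at h1 h3
      refine ⟨h1, fun i hip => ?_⟩
      rcases lt_or_eq_of_le (le_trans hip h1) with hi | hi
      · have hi' : i < (H ρ m).length := by rw [hHlen]; exact hi
        have := h2 i hi' hip
        rwa [hHget ρ m i hi'] at this
      · have hpm : m = pa := by omega
        have h4 := h3 hpm
        rw [hi, h4, hpm]
    · rintro ⟨h1, h2⟩
      refine ⟨by rw [hHlen]; exact h1, fun i hi hip => ?_, fun hm => ?_⟩
      · rw [hHget ρ m i hi]; exact h2 i hip
      · rw [hHlen] at hm
        have h4 := h2 m (le_of_eq hm)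
        rw [h4, hm]
  -- the "uncut" play
  set tld : (ℕ → V) → ℕ → V := fun ρ j => if j < qb then π j else ρ (pa + (j - qb))
    with htld_def
  have htld_lt : ∀ (ρ : ℕ → V) j, j < qb → tld ρ j = π j := by
    intro ρ j hj; simp [htld_def, hj]
  have htld_shift : ∀ (ρ : ℕ → V) s, tld ρ (qb + s) = ρ (pa + s) := by
    intro ρ s
    have hns : ¬ (qb + s < qb) := by omega
    simp [htld_def, hns]
  -- F2: transformed histories
  have hF2 : ∀ (ρ : ℕ → V) m, pa ≤ m → (∀ i, i ≤ pa → ρ i = π i) →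
      L2 ++ (H ρ m).drop pa = H (tld ρ) (qb + (m - pa)) := by
    intro ρ m hm hag
    have hlen1 : L2.length = qb := by simp [hL2_def]
    apply List.ext_getElem
    · simp [hL2_def, hH_def]
    · intro i h1 h2
      have hi2 : i < qb + (m - pa) := by rwa [hHlen] at h2
      rw [hHget (tld ρ) (qb + (m - pa)) i h2]
      by_cases hiq : i < qb
      · rw [List.getElem_append_left (by rw [hlen1]; exact hiq)]
        rw [htld_lt ρ i hiq]
        simp [hL2_def]
      · rw [List.getElem_append_right (by rw [hlen1]; omega)]
        rw [List.getElem_drop]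
        rw [hHget]
        rw [hlen1]
        have h5 : tld ρ i = ρ (pa + (i - qb)) := by
          have h6 := htld_shift ρ (i - qb)
          rwa [show qb + (i - qb) = i from by omega] at h6
        rw [h5]
  -- outcomes of σ' that agree with π up to pa give σ-outcomes after uncutting
  have houtcome_tld : ∀ ρ, A.IsOutcome σ' v ρ → (∀ i, i ≤ pa → ρ i = π i) →
      A.IsOutcome σ v (tld ρ) := by
    rintro ρ ⟨h0, hpl, hstep⟩ hag
    obtain ⟨π0, πpl, πstep⟩ := hout
    have htq : ∀ j, j ≤ qb → tld ρ j = π j := by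
      intro j hj
      rcases lt_or_eq_of_le hj with hv | hv
      · exact htld_lt ρ j hv
      · subst hv
        calc tld ρ qb = ρ pa := by simpa using htld_shift ρ 0
          _ = π pa := hag pa le_rfl
          _ = π qb := heq
    refine ⟨?_, ?_, ?_⟩
    · rw [htq 0 (by omega)]; exact π0
    · intro j
      rcases le_or_gt (j + 1) qb with hj | hj
      · rw [htq j (by omega), htq (j + 1) hj]; exact πpl j
      · have hjq : qb ≤ j := by omega
        have ht1 : tld ρ j = ρ (pa + (j - qb)) := by
          have h6 := htld_shift ρ (j - qb)
          rwa [show qb + (j - qb) = j from by omega] at h6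
        have ht2 : tld ρ (j + 1) = ρ (pa + (j - qb) + 1) := by
          have h6 := htld_shift ρ (j - qb + 1)
          rw [show qb + (j - qb + 1) = j + 1 from by omega] at h6
          exact h6.trans (congrArg ρ (by omega))
        rw [ht1, ht2]
        exact hpl _
    · intro j hj
      rcases lt_or_ge j qb with hjq | hjq
      · have hHj : H (tld ρ) j = H π j := hHcongr _ _ j fun i hi => htld_lt ρ i (by omega)
        have hj' : π j ∈ A.P1 := by rwa [htq j (le_of_lt hjq)] at hj
        calc tld ρ (j + 1) = π (j + 1) := htq (j + 1) hjq
          _ = σ.act (H π j) (π j) := πstep j hj'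
          _ = σ.act (H (tld ρ) j) (tld ρ j) := by rw [hHj, htq j (le_of_lt hjq)]
      · have ht1 : tld ρ j = ρ (pa + (j - qb)) := by
          have h6 := htld_shift ρ (j - qb)
          rwa [show qb + (j - qb) = j from by omega] at h6
        have ht2 : tld ρ (j + 1) = ρ (pa + (j - qb) + 1) := by
          have h6 := htld_shift ρ (j - qb + 1)
          rw [show qb + (j - qb + 1) = j + 1 from by omega] at h6
          exact h6.trans (congrArg ρ (by omega))
        have hjP : ρ (pa + (j - qb)) ∈ A.P1 := by rwa [ht1] at hj
        have hs := hstep (pa + (j - qb)) hjP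
        have hC' : C (H ρ (pa + (j - qb))) (ρ (pa + (j - qb))) :=
          (hCiff ρ _).mpr ⟨by omega, hag⟩
        have hEq := hF2 ρ (pa + (j - qb)) (by omega) hag
        rw [show pa + (j - qb) - pa = j - qb from by omega] at hEq
        calc tld ρ (j + 1) = ρ (pa + (j - qb) + 1) := ht2
          _ = σ'.act (H ρ (pa + (j - qb))) (ρ (pa + (j - qb))) := hs
          _ = σ.act (L2 ++ (H ρ (pa + (j - qb))).drop pa) (ρ (pa + (j - qb))) := by
              rw [hact, if_pos hC']
          _ = σ.act (H (tld ρ) (qb + (j - qb))) (tld ρ j) := by rw [hEq, ht1]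
          _ = σ.act (H (tld ρ) j) (tld ρ j) := by rw [show qb + (j - qb) = j from by omega]
  -- all outcomes of σ' satisfy DirFWMP
  have hall' : ∀ ρ, A.IsOutcome σ' v ρ → A.DirFWMP ℓ lam ρ := by
    intro ρ hρ
    by_cases hag : ∀ i, i ≤ pa → ρ i = π i
    · have htD := hall _ (houtcome_tld ρ hρ hag)
      intro i
      by_cases hip : pa ≤ i
      · obtain ⟨e, he1, heℓ, hesum⟩ := htD (qb + (i - pa))
        refine ⟨e, he1, heℓ, ?_⟩
        have hw : A.winSum ρ i e = A.winSum (tld ρ) (qb + (i - pa)) e := by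
          refine (winSum_congr A (tld ρ) ρ i (qb + (i - pa)) e fun t ht => ?_)
          rw [show qb + (i - pa) + t = qb + ((i - pa) + t) from by omega, htld_shift]
          congr 1; omega
        rwa [hw]
      · push_neg at hip
        obtain ⟨e, he1, heℓ, hle, hesum⟩ := hsafeP i hip
        refine ⟨e, he1, heℓ, ?_⟩
        have hw : A.winSum ρ i e = A.winSum π i e :=
          winSum_congr A π ρ i i e fun t ht => hag (i + t) (by omega)
        rwa [hw]
    · have hρσ : A.IsOutcome σ v ρ := by
        obtain ⟨h0, hpl, hstep⟩ := hρ
        refine ⟨h0, hpl, fun m hm => ?_⟩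
        rw [hstep m hm]
        show σ'.act (H ρ m) (ρ m) = σ.act (H ρ m) (ρ m)
        rw [hact, if_neg]
        intro hc
        exact hag ((hCiff ρ m).mp hc).2
      exact hall ρ hρσ
  -- the cut witness play
  set π' : ℕ → V := fun j => if j < pa then π j else π (qb + (j - pa)) with hπ'_def
  have hπ'lt : ∀ j, j < pa → π' j = π j := by
    intro j hj; simp [hπ'_def, hj]
  have hπ'shift : ∀ t, π' (pa + t) = π (qb + t) := by
    intro t
    have hns : ¬ (pa + t < pa) := by omega
    simp only [hπ'_def, if_neg hns]
    congr 1; omega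
  have hπ'ag : ∀ i, i ≤ pa → π' i = π i := by
    intro i hi
    rcases lt_or_eq_of_le hi with hv | hv
    · exact hπ'lt i hv
    · rw [hv]
      calc π' pa = π (qb + 0) := by simpa using hπ'shift 0
        _ = π qb := by norm_num
        _ = π pa := heq.symm
  have htldπ' : tld π' = π := by
    funext j
    by_cases hj : j < qb
    · exact htld_lt π' j hj
    · have h6 := htld_shift π' (j - qb)
      rw [show qb + (j - qb) = j from by omega] at h6
      rw [h6, hπ'shift]
      congr 1; omega
  have hout' : A.IsOutcome σ' v π' := by
    obtain ⟨π0, πpl, πstep⟩ := hout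
    refine ⟨by rw [hπ'ag 0 (by omega)]; exact π0, ?_, ?_⟩
    · intro j
      rcases le_or_gt (j + 1) pa with hj | hj
      · rw [hπ'ag j (by omega), hπ'ag (j + 1) hj]; exact πpl j
      · have hjpa : pa ≤ j := by omega
        have ht1 : π' j = π (qb + (j - pa)) := by
          have h6 := hπ'shift (j - pa)
          rwa [show pa + (j - pa) = j from by omega] at h6
        have ht2 : π' (j + 1) = π (qb + (j - pa) + 1) := by
          have h6 := hπ'shift (j - pa + 1)
          rw [show pa + (j - pa + 1) = j + 1 from by omega] at h6
          exact h6.trans (congrArg π (by omega))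
        rw [ht1, ht2]
        exact πpl _
    · intro m hm
      rcases lt_or_ge m pa with hmp | hmp
      · have hHm : H π' m = H π m := hHcongr _ _ m fun i hi => hπ'lt i (by omega)
        have hm' : π m ∈ A.P1 := by rwa [hπ'lt m hmp] at hm
        have hC' : ¬ C (H π' m) (π' m) := fun hc => absurd ((hCiff π' m).mp hc).1 (by omega)
        calc π' (m + 1) = π (m + 1) := hπ'ag (m + 1) (by omega)
          _ = σ.act (H π m) (π m) := πstep m hm'
          _ = σ.act (H π' m) (π' m) := by rw [hHm, hπ'lt m hmp]
          _ = σ'.act (H π' m) (π' m) := by rw [hact, if_neg hC']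
      · have hC' : C (H π' m) (π' m) := (hCiff π' m).mpr ⟨hmp, hπ'ag⟩
        have hEq := hF2 π' m hmp hπ'ag
        have hπ'm : π' m = π (qb + (m - pa)) := by
          have h6 := hπ'shift (m - pa)
          rwa [show pa + (m - pa) = m from by omega] at h6
        have hπ'm1 : π' (m + 1) = π (qb + (m - pa) + 1) := by
          have h6 := hπ'shift (m - pa + 1)
          rw [show pa + (m - pa + 1) = m + 1 from by omega] at h6
          exact h6.trans (congrArg π (by omega))
        calc π' (m + 1) = π (qb + (m - pa) + 1) := hπ'm1
          _ = σ.act (H π (qb + (m - pa))) (π (qb + (m - pa))) := πstep _ (hπ'm ▸ hm)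
          _ = σ.act (L2 ++ (H π' m).drop pa) (π' m) := by rw [hEq, htldπ', hπ'm]
          _ = σ'.act (H π' m) (π' m) := by rw [hact, if_pos hC']
  have hT' : π' (n - (qb - pa)) ∈ T := by
    have h1 : π' (n - (qb - pa)) = π n := by
      have h6 := hπ'shift (n - qb)
      rw [show pa + (n - qb) = n - (qb - pa) from by omega] at h6
      exact h6.trans (congrArg π (by omega))
    rwa [h1]
  exact IH (n - (qb - pa)) (by omega) σ' hall' π' hout' hT'

/-- If Player 1 has a strategy from `v` whose outcomes all satisfy
`DirFWMP(ℓ, λ)` and some outcome visits `T`, then Player 1 has such a strategy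
where some outcome visits `T` within the first `|V|·ℓ` steps. -/
theorem sure_dirfwmp_positive_reach_bounded
    {V : Type*} [Fintype V] [Nonempty V] (A : Arena V) (lam : ℝ) (ℓ : ℕ) (hℓ : 1 ≤ ℓ)
    (T : Set V) (v : V)
    (h : ∃ σ : A.Strategy,
      (∀ π : ℕ → V, A.IsOutcome σ v π → A.DirFWMP ℓ lam π) ∧
      (∃ π : ℕ → V, A.IsOutcome σ v π ∧ ∃ n : ℕ, π n ∈ T)) :
    ∃ σ' : A.Strategy,
      (∀ π : ℕ → V, A.IsOutcome σ' v π → A.DirFWMP ℓ lam π) ∧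
      (∃ π : ℕ → V, A.IsOutcome σ' v π ∧ ∃ n : ℕ, n ≤ Fintype.card V * ℓ ∧ π n ∈ T) := by
  obtain ⟨σ, hall, π, hout, n, hT⟩ := h
  exact aux_reach A lam ℓ T v n σ hall π hout hT
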